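/- arXiv:1806.09366 — 4 statements merged into one kernel-verified Lean document; each statement's English description precedes it below -/
import Mathlib

section
/- Let X and Y be real Banach spaces, let Y₂ be a real Banach space and N an absolute norm, and let Y be (isometrically) the absolute sum Y₁ ⊕_a Y₂ of a Banach space Y₁ and Y₂ (so Y₁ is an absolute summand of Y). If the pair (X, Y₁ ⊕_a Y₂) has the Bishop–Phelps–Bollobás property, then the pair (X, Y₁) has the Bishop–Phelps–Bollobás property. -/
open Filter Topology

/-- `N` is an absolute norm on `ℝ²`: a norm with `N(1,0)=N(0,1)=1` and
`N(s,t)=N(|s|,|t|)`. -/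
structure IsAbsoluteNorm (N : ℝ → ℝ → ℝ) : Prop where
  nonneg : ∀ s t : ℝ, 0 ≤ N s t
  eq_zero_iff : ∀ s t : ℝ, N s t = 0 ↔ s = 0 ∧ t = 0
  triangle : ∀ s₁ t₁ s₂ t₂ : ℝ, N (s₁ + s₂) (t₁ + t₂) ≤ N s₁ t₁ + N s₂ t₂
  smul : ∀ c s t : ℝ, N (c * s) (c * t) = |c| * N s t
  one_zero : N 1 0 = 1
  zero_one : N 0 1 = 1
  abs_eq : ∀ s t : ℝ, N s t = N |s| |t|

/-- The pair `(X, Y)` has the Bishop–Phelps–Bollobás property. -/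
def HasBPBp (X Y : Type*) [NormedAddCommGroup X] [NormedSpace ℝ X]
    [NormedAddCommGroup Y] [NormedSpace ℝ Y] : Prop :=
  ∀ ε : ℝ, 0 < ε → ∃ η : ℝ, 0 < η ∧
    ∀ (T : X →L[ℝ] Y) (x₀ : X), ‖T‖ = 1 → ‖x₀‖ = 1 → 1 - η < ‖T x₀‖ →
      ∃ (S : X →L[ℝ] Y) (x₁ : X),
        ‖S‖ = 1 ∧ ‖x₁‖ = 1 ∧ ‖S x₁‖ = 1 ∧ ‖x₁ - x₀‖ < ε ∧ ‖S - T‖ < ε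

namespace IsAbsoluteNorm

variable {N : ℝ → ℝ → ℝ}

lemma fst_zero (hN : IsAbsoluteNorm N) {c : ℝ} (hc : 0 ≤ c) : N c 0 = c := by
  have := hN.smul c 1 0
  simpa [hN.one_zero, abs_of_nonneg hc] using this

lemma zero_snd (hN : IsAbsoluteNorm N) {c : ℝ} (hc : 0 ≤ c) : N 0 c = c := by
  have := hN.smul c 0 1
  simpa [hN.zero_one, abs_of_nonneg hc] using this

lemma mono_right (hN : IsAbsoluteNorm N) {s t t' : ℝ} (ht' : 0 ≤ t') (h : t' ≤ t) :
    N s t' ≤ N s t := by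
  rcases eq_or_lt_of_le (ht'.trans h) with hte | ht
  · have h1 : t' = 0 := by rw [← hte] at h; exact le_antisymm h ht'
    rw [h1, ← hte]
  · set l : ℝ := (t + t') / (2 * t) with hl
    have hl0 : 0 ≤ l := by
      apply div_nonneg <;> linarith
    have hl1 : l ≤ 1 := by
      rw [div_le_one (by linarith)]; linarith
    have hkey : l * t + (1 - l) * (-t) = t' := by
      field_simp [hl]
      have hinv : t * t⁻¹ = 1 := mul_inv_cancel₀ ht.ne'
      rw [hl, div_eq_mul_inv, mul_inv]; linear_combination (t + t') * hinv
    have hskey : l * s + (1 - l) * s = s := by ring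
    calc N s t' = N (l * s + (1 - l) * s) (l * t + (1 - l) * (-t)) := by
          rw [hkey, hskey]
      _ ≤ N (l * s) (l * t) + N ((1 - l) * s) ((1 - l) * (-t)) :=
          hN.triangle _ _ _ _
      _ = l * N s t + (1 - l) * N s (-t) := by
          rw [hN.smul, hN.smul, abs_of_nonneg hl0, abs_of_nonneg (by linarith : (0:ℝ) ≤ 1 - l)]
      _ = l * N s t + (1 - l) * N s t := by
          rw [hN.abs_eq s (-t), abs_neg, ← hN.abs_eq]
      _ = N s t := by ring

lemma mono_left (hN : IsAbsoluteNorm N) {s s' t : ℝ} (hs' : 0 ≤ s') (h : s' ≤ s) :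
    N s' t ≤ N s t := by
  rcases eq_or_lt_of_le (hs'.trans h) with hse | hs
  · have h1 : s' = 0 := by rw [← hse] at h; exact le_antisymm h hs'
    rw [h1, ← hse]
  · set l : ℝ := (s + s') / (2 * s) with hl
    have hl0 : 0 ≤ l := by
      apply div_nonneg <;> linarith
    have hl1 : l ≤ 1 := by
      rw [div_le_one (by linarith)]; linarith
    have hkey : l * s + (1 - l) * (-s) = s' := by
      field_simp [hl]
      have hinv : s * s⁻¹ = 1 := mul_inv_cancel₀ hs.ne'
      rw [hl, div_eq_mul_inv, mul_inv]; linear_combination (s + s') * hinv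
    have htkey : l * t + (1 - l) * t = t := by ring
    calc N s' t = N (l * s + (1 - l) * (-s)) (l * t + (1 - l) * t) := by
          rw [hkey, htkey]
      _ ≤ N (l * s) (l * t) + N ((1 - l) * (-s)) ((1 - l) * t) :=
          hN.triangle _ _ _ _
      _ = l * N s t + (1 - l) * N (-s) t := by
          rw [hN.smul, hN.smul, abs_of_nonneg hl0, abs_of_nonneg (by linarith : (0:ℝ) ≤ 1 - l)]
      _ = l * N s t + (1 - l) * N s t := by
          rw [hN.abs_eq (-s) t, abs_neg, ← hN.abs_eq]
      _ = N s t := by ring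

lemma fst_le (hN : IsAbsoluteNorm N) {s t : ℝ} (hs : 0 ≤ s) (ht : 0 ≤ t) :
    s ≤ N s t := by
  calc s = N s 0 := (hN.fst_zero hs).symm
    _ ≤ N s t := hN.mono_right le_rfl ht

lemma snd_le (hN : IsAbsoluteNorm N) {s t : ℝ} (hs : 0 ≤ s) (ht : 0 ≤ t) :
    t ≤ N s t := by
  calc t = N 0 t := (hN.zero_snd ht).symm
    _ ≤ N s t := hN.mono_left le_rfl hs

lemma le_add (hN : IsAbsoluteNorm N) {s t : ℝ} (hs : 0 ≤ s) (ht : 0 ≤ t) :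
    N s t ≤ s + t := by
  have h := hN.triangle s 0 0 t
  simp only [add_zero, zero_add] at h
  calc N s t ≤ N s 0 + N 0 t := h
    _ = s + t := by rw [hN.fst_zero hs, hN.zero_snd ht]

end IsAbsoluteNorm

set_option maxHeartbeats 1000000 in
theorem bpbp_absolute_summand_range (X Y Y₁ Y₂ : Type*)
    [NormedAddCommGroup X] [NormedSpace ℝ X] [CompleteSpace X]
    [NormedAddCommGroup Y] [NormedSpace ℝ Y] [CompleteSpace Y]
    [NormedAddCommGroup Y₁] [NormedSpace ℝ Y₁] [CompleteSpace Y₁]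
    [NormedAddCommGroup Y₂] [NormedSpace ℝ Y₂] [CompleteSpace Y₂]
    (N : ℝ → ℝ → ℝ) (hN : IsAbsoluteNorm N)
    (e : Y ≃L[ℝ] Y₁ × Y₂) (he : ∀ y : Y, ‖y‖ = N ‖(e y).1‖ ‖(e y).2‖)
    (h : HasBPBp X Y) : HasBPBp X Y₁ := by
  intro ε hε
  set ε' : ℝ := min ε 1 / 3 with hε'def
  have hε'pos : 0 < ε' := by
    have : 0 < min ε 1 := lt_min hε one_pos
    exact div_pos this (by norm_num)
  have hε'le : ε' ≤ 1 / 3 := by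
    have : min ε 1 ≤ 1 := min_le_right _ _
    rw [hε'def]; linarith
  have hε'ε : ε' ≤ ε := by
    have : min ε 1 ≤ ε := min_le_left _ _
    rw [hε'def]; linarith
  obtain ⟨η, hη, hBP⟩ := h ε' hε'pos
  refine ⟨η, hη, ?_⟩
  intro T x₀ hT hx₀ hTx₀
  -- the extended operator into Y
  obtain ⟨Tt, hTtx⟩ : ∃ Tt : X →L[ℝ] Y, ∀ x, e (Tt x) = (T x, 0) :=
    ⟨(e.symm : Y₁ × Y₂ →L[ℝ] Y).comp (T.prod 0), fun x => by simp⟩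
  have hTtnorm : ∀ x, ‖Tt x‖ = ‖T x‖ := fun x => by
    rw [he (Tt x), hTtx x]
    simpa using hN.fst_zero (norm_nonneg (T x))
  have hTt1 : ‖Tt‖ = 1 := by
    refine le_antisymm (Tt.opNorm_le_bound zero_le_one fun x => ?_) ?_
    · rw [hTtnorm x]
      simpa [hT] using T.le_opNorm x
    · rw [← hT]
      refine T.opNorm_le_bound (norm_nonneg Tt) fun x => ?_
      rw [← hTtnorm x]; exact Tt.le_opNorm x
  have hTtx₀ : 1 - η < ‖Tt x₀‖ := by rw [hTtnorm]; exact hTx₀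
  obtain ⟨S, x₁, hS1, hx₁, hSx₁, hx₁x₀, hST⟩ := hBP Tt x₀ hTt1 hx₀ hTtx₀
  -- components of S
  obtain ⟨S₁, S₂, hS₁x, hS₂x⟩ : ∃ (S₁ : X →L[ℝ] Y₁) (S₂ : X →L[ℝ] Y₂),
      (∀ x, (e (S x)).1 = S₁ x) ∧ (∀ x, (e (S x)).2 = S₂ x) :=
    ⟨(ContinuousLinearMap.fst ℝ Y₁ Y₂).comp ((e : Y →L[ℝ] Y₁ × Y₂).comp S),
     (ContinuousLinearMap.snd ℝ Y₁ Y₂).comp ((e : Y →L[ℝ] Y₁ × Y₂).comp S),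
     fun x => rfl, fun x => rfl⟩
  have hSx : ∀ x, ‖S x‖ = N ‖S₁ x‖ ‖S₂ x‖ := fun x => by
    rw [he (S x), hS₁x, hS₂x]
  set δ : ℝ := ‖S - Tt‖ with hδdef
  have hδ0 : 0 ≤ δ := norm_nonneg _
  have hδ : δ < ε' := hST
  have hdiff : ∀ x, e (S x - Tt x) = (S₁ x - T x, S₂ x) := fun x => by
    rw [map_sub, hTtx]
    ext
    · simp [hS₁x]
    · simp [hS₂x]
  have hdn : ∀ x, ‖S x - Tt x‖ = N ‖S₁ x - T x‖ ‖S₂ x‖ := fun x => by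
    rw [he (S x - Tt x), hdiff]
  have hsub : ∀ x, ‖S x - Tt x‖ ≤ δ * ‖x‖ := fun x => by
    simpa using (S - Tt).le_opNorm x
  have hS₂le : ∀ x, ‖S₂ x‖ ≤ δ * ‖x‖ := fun x => by
    have h1 : ‖S₂ x‖ ≤ ‖S x - Tt x‖ := by
      rw [hdn x]; exact hN.snd_le (norm_nonneg _) (norm_nonneg _)
    linarith [hsub x]
  have hS₁Tle : ∀ x, ‖S₁ x - T x‖ ≤ δ * ‖x‖ := fun x => by
    have h1 : ‖S₁ x - T x‖ ≤ ‖S x - Tt x‖ := by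
      rw [hdn x]; exact hN.fst_le (norm_nonneg _) (norm_nonneg _)
    linarith [hsub x]
  set a : ℝ := ‖S₁ x₁‖ with hadef
  set b : ℝ := ‖S₂ x₁‖ with hbdef
  have hNab : N a b = 1 := by rw [← hSx x₁]; exact hSx₁
  have hb : b ≤ δ := by
    have := hS₂le x₁; rwa [hx₁, mul_one] at this
  have ha1 : a ≤ 1 := by
    calc a ≤ N a b := hN.fst_le (norm_nonneg _) (norm_nonneg _)
      _ = 1 := hNab
  have hab : 1 ≤ a + b := by
    have := hN.le_add (s := a) (t := b) (norm_nonneg _) (norm_nonneg _)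
    linarith [hNab.symm.le.trans this]
  have hδ3 : δ < 1 / 3 := lt_of_lt_of_le hδ hε'le
  have ha0 : 0 < a := by linarith
  have hane : a ≠ 0 := ne_of_gt ha0
  -- support functional at S x₁
  have hSx₁ne : S x₁ ≠ 0 := by
    intro h0
    rw [h0, norm_zero] at hSx₁
    norm_num at hSx₁
  obtain ⟨g, hg1, hgx⟩ := exists_dual_vector ℝ (S x₁) (norm_ne_zero_iff.mpr hSx₁ne)
  have hgx1 : g (S x₁) = 1 := by rw [hgx]; simpa using hSx₁
  set α : ℝ := g (e.symm (a⁻¹ • S₁ x₁, 0)) with hαdef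
  obtain ⟨G, hGapp⟩ : ∃ G : Y₂ →L[ℝ] ℝ, ∀ z, G z = g (e.symm (0, z)) :=
    ⟨g.comp ((e.symm : Y₁ × Y₂ →L[ℝ] Y).comp (ContinuousLinearMap.inr ℝ Y₁ Y₂)),
     fun z => rfl⟩
  have hesymm : ∀ p : Y₁ × Y₂, ‖e.symm p‖ = N ‖p.1‖ ‖p.2‖ := fun p => by
    rw [he (e.symm p)]; simp
  -- the key inequality
  have key : ∀ s : ℝ, 0 ≤ s → ∀ z : Y₂, |α| * s + |G z| ≤ N s ‖z‖ := by
    intro s hs z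
    obtain ⟨c, hc1, hc2⟩ : ∃ c : ℝ, |c| = 1 ∧ c * α = |α| := by
      rcases le_or_gt 0 α with hα | hα
      · exact ⟨1, abs_one, by rw [one_mul, abs_of_nonneg hα]⟩
      · exact ⟨-1, by simp, by rw [abs_of_neg hα]; ring⟩
    obtain ⟨d, hd1, hd2⟩ : ∃ d : ℝ, |d| = 1 ∧ d * G z = |G z| := by
      rcases le_or_gt 0 (G z) with hGz | hGz
      · exact ⟨1, abs_one, by rw [one_mul, abs_of_nonneg hGz]⟩
      · exact ⟨-1, by simp, by rw [abs_of_neg hGz]; ring⟩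
    have hyeq : ((c * s * a⁻¹) • S₁ x₁, d • z) =
        (c * s) • ((a⁻¹ • S₁ x₁, (0 : Y₂))) + d • (((0 : Y₁), z)) := by
      ext
      · simp [smul_smul]
      · simp
    have hval : g (e.symm ((c * s * a⁻¹) • S₁ x₁, d • z)) = c * s * α + d * G z := by
      rw [hyeq, map_add, map_smul, map_smul, map_add, map_smul, map_smul]
      simp only [smul_eq_mul]
      rw [hαdef, hGapp]
    have hnormy : ‖e.symm ((c * s * a⁻¹) • S₁ x₁, d • z)‖ = N s ‖z‖ := by
      rw [hesymm]
      simp only [norm_smul, Real.norm_eq_abs]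
      have h1 : |c * s * a⁻¹| * ‖S₁ x₁‖ = s := by
        rw [abs_mul, abs_mul, hc1, abs_of_nonneg hs, abs_inv, abs_of_pos ha0, ← hadef]
        field_simp
      have h2 : |d| * ‖z‖ = ‖z‖ := by rw [hd1, one_mul]
      rw [h1, h2]
    calc |α| * s + |G z| = c * s * α + d * G z := by
          rw [← hc2, ← hd2]; ring
      _ = g (e.symm ((c * s * a⁻¹) • S₁ x₁, d • z)) := hval.symm
      _ ≤ ‖g (e.symm ((c * s * a⁻¹) • S₁ x₁, d • z))‖ := le_abs_self _
      _ ≤ ‖g‖ * ‖e.symm ((c * s * a⁻¹) • S₁ x₁, d • z)‖ := g.le_opNorm _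
      _ = N s ‖z‖ := by rw [hg1, one_mul, hnormy]
  have hα_le : |α| ≤ 1 := by
    have := key 1 zero_le_one 0
    simpa [hN.one_zero] using this
  have hGle : ∀ z : Y₂, |G z| ≤ ‖z‖ := fun z => by
    have := key 0 le_rfl z
    simpa [hN.zero_snd (norm_nonneg z)] using this
  have hbound : ∀ x, |α| * ‖S₁ x‖ + |G (S₂ x)| ≤ ‖x‖ := fun x => by
    have h1 := key ‖S₁ x‖ (norm_nonneg _) (S₂ x)
    have h2 : ‖S x‖ ≤ ‖x‖ := by simpa [hS1] using S.le_opNorm x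
    rw [← hSx x] at h1
    linarith
  have hS₁le : ∀ x, ‖S₁ x‖ ≤ ‖x‖ := fun x => by
    have h1 : ‖S₁ x‖ ≤ N ‖S₁ x‖ ‖S₂ x‖ := hN.fst_le (norm_nonneg _) (norm_nonneg _)
    have h2 : ‖S x‖ ≤ ‖x‖ := by simpa [hS1] using S.le_opNorm x
    rw [← hSx x] at h1
    linarith
  -- the equality at x₁
  have hone : α * a + G (S₂ x₁) = 1 := by
    have hpt : (S₁ x₁, S₂ x₁) = a • ((a⁻¹ • S₁ x₁, (0 : Y₂))) + (((0 : Y₁), S₂ x₁)) := by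
      ext
      · simp [smul_smul, hane]
      · simp
    have hp2 : e.symm (S₁ x₁, S₂ x₁) = S x₁ := by
      have : (S₁ x₁, S₂ x₁) = e (S x₁) := Prod.ext (hS₁x x₁).symm (hS₂x x₁).symm
      rw [this, e.symm_apply_apply]
    calc α * a + G (S₂ x₁)
        = g (a • e.symm ((a⁻¹ • S₁ x₁, (0 : Y₂)))) + g (e.symm (((0 : Y₁), S₂ x₁))) := by
          rw [map_smul]; simp only [smul_eq_mul]; rw [hGapp]; ring
      _ = g (e.symm ((S₁ x₁, S₂ x₁))) := by
          rw [← map_smul, ← map_add, ← map_add, ← hpt]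
      _ = 1 := by rw [hp2, hgx1]
  have hGv : |G (S₂ x₁)| ≤ b := hGle _
  have hαa : 1 - b ≤ α * a := by
    have h1 : G (S₂ x₁) ≤ b := le_trans (le_abs_self _) hGv
    linarith
  have hα0 : 0 < α := by
    rcases le_or_gt α 0 with hle | hlt
    · have h0 : α * a ≤ 0 := mul_nonpos_iff.mpr (Or.inr ⟨hle, ha0.le⟩)
      linarith
    · exact hlt
  have hαle1 : α ≤ 1 := le_trans (le_abs_self α) hα_le
  have h1α : 1 - α ≤ b := by
    have hm : α * a ≤ α * 1 := mul_le_mul_of_nonneg_left ha1 hα0.le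
    rw [mul_one] at hm
    linarith
  -- the new operator
  obtain ⟨R, hRapp⟩ : ∃ R : X →L[ℝ] Y₁, ∀ x,
      R x = α • S₁ x + (G (S₂ x)) • (a⁻¹ • S₁ x₁) :=
    ⟨α • S₁ + (G.comp S₂).smulRight (a⁻¹ • S₁ x₁), fun x => by
      simp [ContinuousLinearMap.smulRight_apply]⟩
  have hinvu : ‖a⁻¹ • S₁ x₁‖ = 1 := by
    rw [norm_smul, Real.norm_eq_abs, abs_inv, abs_of_pos ha0, ← hadef]
    field_simp
  have hRx₁ : R x₁ = a⁻¹ • S₁ x₁ := by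
    rw [hRapp, smul_smul, ← add_smul]
    congr 1
    field_simp
    linarith [hone]
  have hRx₁n : ‖R x₁‖ = 1 := by rw [hRx₁]; exact hinvu
  have hRle : ‖R‖ ≤ 1 := by
    refine R.opNorm_le_bound zero_le_one fun x => ?_
    rw [one_mul, hRapp]
    calc ‖α • S₁ x + (G (S₂ x)) • (a⁻¹ • S₁ x₁)‖
        ≤ ‖α • S₁ x‖ + ‖(G (S₂ x)) • (a⁻¹ • S₁ x₁)‖ := norm_add_le _ _
      _ = |α| * ‖S₁ x‖ + |G (S₂ x)| := by
          rw [norm_smul, norm_smul, Real.norm_eq_abs, Real.norm_eq_abs, hinvu, mul_one]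
      _ ≤ ‖x‖ := hbound x
  have hR1 : ‖R‖ = 1 := by
    refine le_antisymm hRle ?_
    calc (1 : ℝ) = ‖R x₁‖ := hRx₁n.symm
      _ ≤ ‖R‖ * ‖x₁‖ := R.le_opNorm x₁
      _ = ‖R‖ := by rw [hx₁, mul_one]
  have hRT : ‖R - T‖ < ε := by
    have hRTle : ‖R - T‖ ≤ 3 * δ := by
      refine (R - T).opNorm_le_bound (by linarith) fun x => ?_
      have e1 : (R - T) x = ((α - 1) • S₁ x + (G (S₂ x)) • (a⁻¹ • S₁ x₁)) + (S₁ x - T x) := by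
        rw [ContinuousLinearMap.sub_apply, hRapp]
        have : (α - 1) • S₁ x = α • S₁ x - S₁ x := by rw [sub_smul, one_smul]
        rw [this]
        abel
      rw [e1]
      have h2 : ‖(α - 1) • S₁ x + (G (S₂ x)) • (a⁻¹ • S₁ x₁)‖
          ≤ (1 - α) * ‖x‖ + δ * ‖x‖ := by
        calc ‖(α - 1) • S₁ x + (G (S₂ x)) • (a⁻¹ • S₁ x₁)‖
            ≤ ‖(α - 1) • S₁ x‖ + ‖(G (S₂ x)) • (a⁻¹ • S₁ x₁)‖ := norm_add_le _ _
          _ = |α - 1| * ‖S₁ x‖ + |G (S₂ x)| := by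
              rw [norm_smul, norm_smul, Real.norm_eq_abs, Real.norm_eq_abs, hinvu, mul_one]
          _ ≤ (1 - α) * ‖x‖ + δ * ‖x‖ := by
              have hh1 : |α - 1| = 1 - α := by rw [abs_of_nonpos (by linarith)]; ring
              have hh2 : |G (S₂ x)| ≤ ‖S₂ x‖ := hGle _
              have hh3 : ‖S₂ x‖ ≤ δ * ‖x‖ := hS₂le x
              have hh4 : ‖S₁ x‖ ≤ ‖x‖ := hS₁le x
              have hh5 : (0:ℝ) ≤ 1 - α := by linarith
              rw [hh1]
              exact add_le_add (mul_le_mul_of_nonneg_left hh4 hh5) (hh2.trans hh3)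
      have h3 : ‖S₁ x - T x‖ ≤ δ * ‖x‖ := hS₁Tle x
      have h4 : 1 - α ≤ δ := by linarith
      calc ‖((α - 1) • S₁ x + (G (S₂ x)) • (a⁻¹ • S₁ x₁)) + (S₁ x - T x)‖
          ≤ ‖(α - 1) • S₁ x + (G (S₂ x)) • (a⁻¹ • S₁ x₁)‖ + ‖S₁ x - T x‖ := norm_add_le _ _
        _ ≤ ((1 - α) * ‖x‖ + δ * ‖x‖) + δ * ‖x‖ := by linarith
        _ ≤ 3 * δ * ‖x‖ := by
            have hm : (1 - α) * ‖x‖ ≤ δ * ‖x‖ :=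
              mul_le_mul_of_nonneg_right h4 (norm_nonneg x)
            linarith
    have h3e : 3 * ε' ≤ ε := by
      have : min ε 1 ≤ ε := min_le_left _ _
      rw [hε'def]; linarith
    linarith
  exact ⟨R, x₁, hR1, hx₁, hRx₁n, lt_of_lt_of_le hx₁x₀ hε'ε, hRT⟩
end

section
/- Let X be a real Banach space and let Y = Y₁ ⊕_a Y₂ be the absolute sum of real Banach spaces Y₁ and Y₂ with respect to an absolute norm N (so Y₁ is an absolute summand of Y). If the set NA(X, Y₁ ⊕_a Y₂) of norm attaining operators is dense in the space L(X, Y₁ ⊕_a Y₂) of all bounded linear operators, then NA(X, Y₁) is dense in L(X, Y₁). -/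
open Filter Topology

/-- The set of norm attaining bounded linear operators from `X` to `Y`. -/
def NA (X Y : Type*) [NormedAddCommGroup X] [NormedSpace ℝ X]
    [NormedAddCommGroup Y] [NormedSpace ℝ Y] : Set (X →L[ℝ] Y) :=
  {T | ∃ x₀ : X, ‖x₀‖ = 1 ∧ ‖T x₀‖ = ‖T‖}

lemma abs_add_abs_le_max (p q : ℝ) : |p| + |q| ≤ max |p + q| |p - q| := by
  rcases le_total 0 p with hp | hp <;> rcases le_total 0 q with hq | hq
  · refine le_max_of_le_left ?_
    rw [abs_of_nonneg hp, abs_of_nonneg hq, abs_of_nonneg (by linarith)]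
  · refine le_max_of_le_right ?_
    rw [abs_of_nonneg hp, abs_of_nonpos hq, abs_of_nonneg (by linarith)]
    linarith
  · refine le_max_of_le_right ?_
    rw [abs_of_nonpos hp, abs_of_nonneg hq, abs_of_nonpos (by linarith)]
    linarith
  · refine le_max_of_le_left ?_
    rw [abs_of_nonpos hp, abs_of_nonpos hq, abs_of_nonpos (by linarith)]
    linarith

set_option maxHeartbeats 1000000 in
theorem na_dense_absolute_summand_range (X Y Y₁ Y₂ : Type*)
    [NormedAddCommGroup X] [NormedSpace ℝ X] [CompleteSpace X]
    [NormedAddCommGroup Y] [NormedSpace ℝ Y] [CompleteSpace Y]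
    [NormedAddCommGroup Y₁] [NormedSpace ℝ Y₁] [CompleteSpace Y₁]
    [NormedAddCommGroup Y₂] [NormedSpace ℝ Y₂] [CompleteSpace Y₂]
    (N : ℝ → ℝ → ℝ) (hN : IsAbsoluteNorm N)
    (e : Y ≃L[ℝ] Y₁ × Y₂) (he : ∀ y : Y, ‖y‖ = N ‖(e y).1‖ ‖(e y).2‖)
    (h : Dense (NA X Y)) : Dense (NA X Y₁) := by
  classical
  -- Basic facts about the absolute norm N
  have hN10 : ∀ s : ℝ, 0 ≤ s → N s 0 = s := by
    intro s hs
    have h1 := hN.smul s 1 0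
    rwa [mul_one, mul_zero, hN.one_zero, mul_one, abs_of_nonneg hs] at h1
  have hN01 : ∀ t : ℝ, 0 ≤ t → N 0 t = t := by
    intro t ht
    have h1 := hN.smul t 0 1
    rwa [mul_one, mul_zero, hN.zero_one, mul_one, abs_of_nonneg ht] at h1
  have hmono1 : ∀ s t : ℝ, 0 ≤ s → 0 ≤ t → s ≤ N s t := by
    intro s t hs ht
    have h1 := hN.triangle s t s (-t)
    have h2 : N s (-t) = N s t := by
      rw [hN.abs_eq s (-t), abs_neg, ← hN.abs_eq]
    have h3 : N (s + s) (t + -t) = 2 * N s 0 := by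
      have h4 := hN.smul 2 s 0
      rw [mul_zero] at h4
      rw [add_neg_cancel, show s + s = 2 * s by ring, h4,
        abs_of_nonneg (by norm_num : (0:ℝ) ≤ 2)]
    rw [h3, h2, hN10 s hs] at h1
    linarith
  have hmono2 : ∀ s t : ℝ, 0 ≤ s → 0 ≤ t → t ≤ N s t := by
    intro s t hs ht
    have h1 := hN.triangle s t (-s) t
    have h2 : N (-s) t = N s t := by
      rw [hN.abs_eq (-s) t, abs_neg, ← hN.abs_eq]
    have h3 : N (s + -s) (t + t) = 2 * N 0 t := by
      have h4 := hN.smul 2 0 t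
      rw [mul_zero] at h4
      rw [add_neg_cancel, show t + t = 2 * t by ring, h4,
        abs_of_nonneg (by norm_num : (0:ℝ) ≤ 2)]
    rw [h3, h2, hN01 t ht] at h1
    linarith
  have hNub : ∀ s t : ℝ, 0 ≤ s → 0 ≤ t → N s t ≤ s + t := by
    intro s t hs ht
    have h1 := hN.triangle s 0 0 t
    rw [add_zero, zero_add, hN10 s hs, hN01 t ht] at h1
    exact h1
  -- norm of e.symm on pairs
  have hea : ∀ (w : Y₁) (z : Y₂), ‖(e.symm (w, z) : Y)‖ = N ‖w‖ ‖z‖ := by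
    intro w z
    rw [he (e.symm (w, z))]
    simp
  have hfst : ∀ y : Y, ‖(e y).1‖ ≤ ‖y‖ := by
    intro y
    rw [he y]
    exact hmono1 _ _ (norm_nonneg _) (norm_nonneg _)
  have hsnd : ∀ y : Y, ‖(e y).2‖ ≤ ‖y‖ := by
    intro y
    rw [he y]
    exact hmono2 _ _ (norm_nonneg _) (norm_nonneg _)
  -- existence of a unit vector in X
  have hX : ∃ x : X, ‖x‖ = 1 := by
    obtain ⟨S, hS⟩ := h.nonempty
    obtain ⟨x, hx, -⟩ := hS
    exact ⟨x, hx⟩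
  rw [Metric.dense_iff]
  intro T ε hε
  by_cases hT0 : T = 0
  · refine ⟨T, Metric.mem_ball_self hε, ?_⟩
    obtain ⟨x, hx⟩ := hX
    exact ⟨x, hx, by simp [hT0]⟩
  have hM : 0 < ‖T‖ := norm_pos_iff.mpr hT0
  set M := ‖T‖ with hMdef
  set δ : ℝ := min (ε / 5) (M / 4) with hδdef
  have hδpos : 0 < δ := lt_min (by linarith) (by linarith)
  have hδε : δ ≤ ε / 5 := min_le_left _ _
  have hδM : δ ≤ M / 4 := min_le_right _ _
  -- the operator S₀ = (T, 0)
  set S₀ : X →L[ℝ] Y :=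
    (e.symm : Y₁ × Y₂ →L[ℝ] Y).comp ((ContinuousLinearMap.inl ℝ Y₁ Y₂).comp T) with hS₀def
  have hS₀app : ∀ x : X, S₀ x = e.symm (T x, 0) := fun x => rfl
  have hS₀x : ∀ x : X, ‖S₀ x‖ = ‖T x‖ := by
    intro x
    rw [hS₀app, hea, norm_zero, hN10 _ (norm_nonneg _)]
  have hS₀n : ‖S₀‖ = M := by
    refine le_antisymm (ContinuousLinearMap.opNorm_le_bound _ hM.le fun x => ?_)
      (ContinuousLinearMap.opNorm_le_bound _ (norm_nonneg S₀) fun x => ?_)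
    · rw [hS₀x]; exact T.le_opNorm x
    · rw [← hS₀x]; exact S₀.le_opNorm x
  -- approximate by a norm attaining operator
  obtain ⟨S, hSball, hSNA⟩ := Metric.dense_iff.mp h S₀ δ hδpos
  obtain ⟨x₀, hx₀, hSx₀⟩ := hSNA
  have hSS₀ : ‖S - S₀‖ < δ := by
    rw [← dist_eq_norm]
    exact Metric.mem_ball.mp hSball
  -- projections
  set P₁ : Y →L[ℝ] Y₁ :=
    (ContinuousLinearMap.fst ℝ Y₁ Y₂).comp (e : Y →L[ℝ] Y₁ × Y₂) with hP₁def
  set P₂ : Y →L[ℝ] Y₂ :=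
    (ContinuousLinearMap.snd ℝ Y₁ Y₂).comp (e : Y →L[ℝ] Y₁ × Y₂) with hP₂def
  have hP₁app : ∀ y : Y, P₁ y = (e y).1 := fun y => rfl
  have hP₂app : ∀ y : Y, P₂ y = (e y).2 := fun y => rfl
  have hP₁le : ∀ R : X →L[ℝ] Y, ‖P₁.comp R‖ ≤ ‖R‖ := by
    intro R
    refine ContinuousLinearMap.opNorm_le_bound _ (norm_nonneg R) fun x => ?_
    exact le_trans (hfst (R x)) (R.le_opNorm x)
  have hP₂le : ∀ R : X →L[ℝ] Y, ‖P₂.comp R‖ ≤ ‖R‖ := by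
    intro R
    refine ContinuousLinearMap.opNorm_le_bound _ (norm_nonneg R) fun x => ?_
    exact le_trans (hsnd (R x)) (R.le_opNorm x)
  set S₁ : X →L[ℝ] Y₁ := P₁.comp S with hS₁def
  set S₂ : X →L[ℝ] Y₂ := P₂.comp S with hS₂def
  have hS₁app : ∀ x : X, S₁ x = (e (S x)).1 := fun x => rfl
  have hS₂app : ∀ x : X, S₂ x = (e (S x)).2 := fun x => rfl
  have hS₁T : ‖S₁ - T‖ < δ := by
    have heq : S₁ - T = P₁.comp (S - S₀) := by
      ext x
      simp only [ContinuousLinearMap.sub_apply, ContinuousLinearMap.comp_apply, hP₁app, hS₀app,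
        map_sub]
      simp [hS₁app]
    rw [heq]
    exact lt_of_le_of_lt (hP₁le _) hSS₀
  have hS₂n : ‖S₂‖ < δ := by
    have heq : S₂ = P₂.comp (S - S₀) := by
      ext x
      simp only [ContinuousLinearMap.sub_apply, ContinuousLinearMap.comp_apply, hP₂app, hS₀app,
        map_sub]
      simp [hS₂app]
    rw [heq]
    exact lt_of_le_of_lt (hP₂le _) hSS₀
  set a : ℝ := ‖S₁ x₀‖ with hadef
  set b : ℝ := ‖S₂ x₀‖ with hbdef
  have ha0 : 0 ≤ a := norm_nonneg _
  have hb0 : 0 ≤ b := norm_nonneg _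
  have hab : N a b = ‖S‖ := by
    rw [← hSx₀, he (S x₀), hadef, hbdef, hS₁app, hS₂app]
  have hSn_lb : M - δ ≤ ‖S‖ := by
    have h1 : ‖S₀‖ - ‖S‖ ≤ ‖S₀ - S‖ := norm_sub_norm_le _ _
    rw [norm_sub_rev] at h1
    rw [hS₀n] at h1
    linarith
  have hSn_ub : ‖S‖ ≤ M + δ := by
    have h1 : ‖S‖ - ‖S₀‖ ≤ ‖S - S₀‖ := norm_sub_norm_le _ _
    rw [hS₀n] at h1
    linarith
  have hbδ : b < δ := lt_of_le_of_lt (S₂.unit_le_opNorm x₀ hx₀.le) hS₂n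
  have haN : a ≤ N a b := hmono1 a b ha0 hb0
  have hNab_ub : N a b ≤ a + b := hNub a b ha0 hb0
  have ha_lb : M - 2 * δ ≤ a := by
    have := hab
    linarith
  have haM2 : M / 2 ≤ a := by linarith
  have hapos : 0 < a := by linarith
  -- dual functional
  have hy₀ : S x₀ ≠ 0 := by
    intro h0
    have h1 : ‖S x₀‖ = 0 := by rw [h0, norm_zero]
    rw [hSx₀] at h1
    linarith
  obtain ⟨f, hf1, hfy'⟩ := exists_dual_vector ℝ (S x₀) (norm_ne_zero_iff.mpr hy₀)
  have hfy : f (S x₀) = ‖S x₀‖ := by exact_mod_cast hfy'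
  have hfle : ∀ y : Y, |f y| ≤ ‖y‖ := by
    intro y
    calc |f y| = ‖f y‖ := (Real.norm_eq_abs _).symm
    _ ≤ ‖f‖ * ‖y‖ := f.le_opNorm y
    _ = ‖y‖ := by rw [hf1, one_mul]
  set w₁ : Y := e.symm (S₁ x₀, (0 : Y₂)) with hw₁def
  set w₂ : Y := e.symm ((0 : Y₁), S₂ x₀) with hw₂def
  have hw₁n : ‖w₁‖ = a := by rw [hw₁def, hea, norm_zero, hN10 _ ha0]
  have hw₂n : ‖w₂‖ = b := by rw [hw₂def, hea, norm_zero, hN01 _ hb0]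
  have hw12 : w₁ + w₂ = S x₀ := by
    rw [hw₁def, hw₂def, ← map_add]
    have : (S₁ x₀, (0 : Y₂)) + ((0 : Y₁), S₂ x₀) = e (S x₀) := by
      rw [hS₁app, hS₂app]
      ext <;> simp
    rw [this, e.symm_apply_apply]
  set α : ℝ := f w₁ / a with hαdef
  set u : Y₁ := a⁻¹ • S₁ x₀ with hudef
  have hu : ‖u‖ = 1 := by
    rw [hudef, norm_smul, norm_inv, Real.norm_eq_abs, abs_of_pos hapos, ← hadef,
      inv_mul_cancel₀ hapos.ne']
  set g : X →L[ℝ] ℝ :=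
    f.comp ((e.symm : Y₁ × Y₂ →L[ℝ] Y).comp ((ContinuousLinearMap.inr ℝ Y₁ Y₂).comp S₂))
    with hgdef
  have hgapp : ∀ x : X, g x = f (e.symm ((0 : Y₁), S₂ x)) := fun x => rfl
  set T' : X →L[ℝ] Y₁ := α • S₁ + g.smulRight u with hT'def
  have hT'app : ∀ x : X, T' x = α • S₁ x + g x • u := by
    intro x
    simp [hT'def]
  -- key bound : ‖T' x‖ ≤ ‖S x‖
  have hkey : ∀ x : X, ‖T' x‖ ≤ ‖S x‖ := by
    intro x
    set s : ℝ := ‖S₁ x‖ with hsdef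
    have hs0 : 0 ≤ s := norm_nonneg _
    set c : ℝ := s / a with hcdef
    have hc0 : 0 ≤ c := div_nonneg hs0 ha0
    set v₁ : Y := c • w₁ with hv₁def
    set v₂ : Y := e.symm ((0 : Y₁), S₂ x) with hv₂def
    have hcs : ‖c • S₁ x₀‖ = s := by
      rw [norm_smul, Real.norm_eq_abs, abs_of_nonneg hc0, ← hadef, hcdef,
        div_mul_cancel₀ _ hapos.ne']
    have hsum : ‖v₁ + v₂‖ = ‖S x‖ := by
      rw [hv₁def, hv₂def, hw₁def, ← map_smul, ← map_add]
      have : c • (S₁ x₀, (0 : Y₂)) + ((0 : Y₁), S₂ x) = (c • S₁ x₀, S₂ x) := by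
        ext <;> simp
      rw [this, hea, hcs, he (S x), ← hS₁app, ← hS₂app, ← hsdef]
    have hdiff : ‖v₁ - v₂‖ = ‖S x‖ := by
      rw [hv₁def, hv₂def, hw₁def, ← map_smul, ← map_sub]
      have : c • (S₁ x₀, (0 : Y₂)) - ((0 : Y₁), S₂ x) = (c • S₁ x₀, -(S₂ x)) := by
        ext <;> simp
      rw [this, hea, hcs, norm_neg, he (S x), ← hS₁app, ← hS₂app, ← hsdef]
    have hαs : |α| * s = |f v₁| := by
      rw [hv₁def, map_smul, smul_eq_mul, abs_mul, abs_of_nonneg hc0, hαdef, hcdef, abs_div,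
        abs_of_pos hapos]
      ring
    have hgv : g x = f v₂ := by rw [hgapp, hv₂def]
    calc ‖T' x‖ ≤ ‖α • S₁ x‖ + ‖g x • u‖ := by rw [hT'app]; exact norm_add_le _ _
    _ = |α| * s + |g x| := by
        rw [norm_smul, norm_smul, hu, mul_one, Real.norm_eq_abs, Real.norm_eq_abs, ← hsdef]
    _ = |f v₁| + |f v₂| := by rw [hαs, hgv]
    _ ≤ max |f v₁ + f v₂| |f v₁ - f v₂| := abs_add_abs_le_max _ _
    _ ≤ ‖S x‖ := by
        refine max_le ?_ ?_
        · rw [← map_add]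
          exact le_trans (hfle _) (le_of_eq hsum)
        · rw [← map_sub]
          exact le_trans (hfle _) (le_of_eq hdiff)
  -- T' attains its norm at x₀
  have hS₁x₀u : S₁ x₀ = a • u := by
    rw [hudef, smul_smul, mul_inv_cancel₀ hapos.ne', one_smul]
  have hT'x₀ : ‖T' x₀‖ = N a b := by
    have h1 : T' x₀ = (N a b) • u := by
      rw [hT'app, hS₁x₀u, smul_smul, hαdef, div_mul_cancel₀ _ hapos.ne', hgapp, ← hw₂def,
        ← add_smul]
      congr 1
      rw [← map_add f w₁ w₂, hw12, hfy, hSx₀, hab]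
    rw [h1, norm_smul, Real.norm_eq_abs, abs_of_nonneg (hN.nonneg a b), hu, mul_one]
  have hT'n : ‖T'‖ = N a b := by
    refine le_antisymm (ContinuousLinearMap.opNorm_le_bound _ (hN.nonneg a b) fun x => ?_) ?_
    · calc ‖T' x‖ ≤ ‖S x‖ := hkey x
      _ ≤ ‖S‖ * ‖x‖ := S.le_opNorm x
      _ = N a b * ‖x‖ := by rw [hab]
    · calc N a b = ‖T' x₀‖ := hT'x₀.symm
      _ ≤ ‖T'‖ * ‖x₀‖ := T'.le_opNorm x₀
      _ = ‖T'‖ := by rw [hx₀, mul_one]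
  refine ⟨T', ?_, ⟨x₀, hx₀, hT'x₀.trans hT'n.symm⟩⟩
  -- distance estimate
  have hα1 : α ≤ 1 := by
    rw [hαdef, div_le_one hapos]
    calc f w₁ ≤ |f w₁| := le_abs_self _
    _ ≤ ‖w₁‖ := hfle _
    _ = a := hw₁n
  have hfw₁lb : a - b ≤ f w₁ := by
    have h1 : f w₁ = f (S x₀) - f w₂ := by rw [← hw12, map_add]; ring
    have h2 : f (S x₀) = N a b := by rw [hfy, hSx₀, hab]
    have h3 : |f w₂| ≤ b := le_of_le_of_eq (hfle _) hw₂n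
    have h4 := abs_le.mp h3
    rw [h1, h2]
    linarith
  set k : ℝ := |1 - α| with hkdef
  have hk0 : 0 ≤ k := abs_nonneg _
  have hka : k * a ≤ b := by
    have h1 : k = 1 - α := abs_of_nonneg (by linarith)
    have h2 : α * a = f w₁ := by rw [hαdef, div_mul_cancel₀ _ hapos.ne']
    rw [h1, sub_mul, one_mul, h2]
    linarith
  have hT'S₁ : ‖T' - S₁‖ ≤ k * ‖S₁‖ + ‖S₂‖ := by
    refine ContinuousLinearMap.opNorm_le_bound _
      (by positivity) fun x => ?_
    have h1 : (T' - S₁) x = (α - 1) • S₁ x + g x • u := by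
      rw [ContinuousLinearMap.sub_apply, hT'app, sub_smul, one_smul]
      abel
    have h2 : |g x| ≤ ‖S₂‖ * ‖x‖ := by
      calc |g x| ≤ ‖e.symm ((0 : Y₁), S₂ x)‖ := by rw [hgapp]; exact hfle _
      _ = ‖S₂ x‖ := by rw [hea, norm_zero, hN01 _ (norm_nonneg _)]
      _ ≤ ‖S₂‖ * ‖x‖ := S₂.le_opNorm x
    calc ‖(T' - S₁) x‖ ≤ ‖(α - 1) • S₁ x‖ + ‖g x • u‖ := by rw [h1]; exact norm_add_le _ _
    _ = |α - 1| * ‖S₁ x‖ + |g x| := by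
        rw [norm_smul, norm_smul, hu, mul_one, Real.norm_eq_abs, Real.norm_eq_abs]
    _ = k * ‖S₁ x‖ + |g x| := by rw [hkdef, abs_sub_comm]
    _ ≤ k * (‖S₁‖ * ‖x‖) + ‖S₂‖ * ‖x‖ := by
        refine add_le_add ?_ h2
        exact mul_le_mul_of_nonneg_left (S₁.le_opNorm x) hk0
    _ = (k * ‖S₁‖ + ‖S₂‖) * ‖x‖ := by ring
  have hS₁n : ‖S₁‖ ≤ M + δ := le_trans (hP₁le S) hSn_ub
  have hS₁T' : ‖S₁ - T‖ < δ := hS₁T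
  -- numeric conclusion
  have hkM : k * M ≤ 2 * δ := by
    have h1 : k * (M / 2) ≤ k * a := mul_le_mul_of_nonneg_left haM2 hk0
    have h2 : k * M = 2 * (k * (M / 2)) := by ring
    linarith
  have hk1 : k ≤ 1 := by
    have h1 : k * a ≤ (1 / 2) * a := by linarith
    have h2 : k ≤ 1 / 2 := le_of_mul_le_mul_right h1 hapos
    linarith
  have hfinal : ‖T' - T‖ < 5 * δ := by
    have h1 : ‖T' - T‖ ≤ ‖T' - S₁‖ + ‖S₁ - T‖ := by
      have : T' - T = (T' - S₁) + (S₁ - T) := by abel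
      rw [this]
      exact norm_add_le _ _
    have h2 : k * ‖S₁‖ ≤ k * (M + δ) := mul_le_mul_of_nonneg_left hS₁n hk0
    have h3 : k * (M + δ) = k * M + k * δ := by ring
    have h4 : k * δ ≤ δ := mul_le_of_le_one_left hδpos.le hk1
    linarith
  rw [Metric.mem_ball, dist_eq_norm]
  linarith
end

section
/- Let X be a real Banach space and let Y = Y₁ ⊕_a Y₂ be the absolute sum of real Banach spaces Y₁ and Y₂ with respect to an absolute norm N (so Y₁ is an absolute summand of Y). If the set of norm attaining compact operators NA(X, Y₁ ⊕_a Y₂) ∩ K(X, Y₁ ⊕_a Y₂) is dense in the space K(X, Y₁ ⊕_a Y₂) of compact bounded linear operators, then NA(X, Y₁) ∩ K(X, Y₁) is dense in K(X, Y₁). -/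
open Filter Topology

namespace IsAbsoluteNormAux

variable {N : ℝ → ℝ → ℝ}

lemma N_s_zero (hN : IsAbsoluteNorm N) {s : ℝ} (hs : 0 ≤ s) : N s 0 = s := by
  have h := hN.smul s 1 0
  rw [mul_one, mul_zero, hN.one_zero, mul_one, abs_of_nonneg hs] at h
  exact h

lemma N_zero_t (hN : IsAbsoluteNorm N) {t : ℝ} (ht : 0 ≤ t) : N 0 t = t := by
  have h := hN.smul t 0 1
  rw [mul_one, mul_zero, hN.zero_one, mul_one, abs_of_nonneg ht] at h
  exact h

lemma N_neg_right (hN : IsAbsoluteNorm N) (s t : ℝ) : N s (-t) = N s t := by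
  rw [hN.abs_eq s (-t), abs_neg, ← hN.abs_eq]

lemma N_neg_left (hN : IsAbsoluteNorm N) (s t : ℝ) : N (-s) t = N s t := by
  rw [hN.abs_eq (-s) t, abs_neg, ← hN.abs_eq]

lemma le_N_left (hN : IsAbsoluteNorm N) {s t : ℝ} (hs : 0 ≤ s) :
    s ≤ N s t := by
  have h := hN.triangle s t s (-t)
  rw [add_neg_cancel, N_neg_right hN] at h
  have h2 : N (s + s) 0 = s + s := N_s_zero hN (by linarith)
  rw [h2] at h
  linarith

lemma le_N_right (hN : IsAbsoluteNorm N) {s t : ℝ} (ht : 0 ≤ t) :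
    t ≤ N s t := by
  have h := hN.triangle s t (-s) t
  rw [add_neg_cancel, N_neg_left hN] at h
  have h2 : N 0 (t + t) = t + t := N_zero_t hN (by linarith)
  rw [h2] at h
  linarith

lemma N_le_add (hN : IsAbsoluteNorm N) {s t : ℝ} (hs : 0 ≤ s) (ht : 0 ≤ t) :
    N s t ≤ s + t := by
  have h := hN.triangle s 0 0 t
  rw [add_zero, zero_add, N_s_zero hN hs, N_zero_t hN ht] at h
  exact h

set_option maxHeartbeats 1000000 in
open ContinuousLinearMap in
/-- The main step: the nontrivial case of the theorem, with the absolute sum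
structure given by abstract injections and projections. -/
lemma main_step {X Y Y₁ Y₂ : Type*}
    [NormedAddCommGroup X] [NormedSpace ℝ X]
    [NormedAddCommGroup Y] [NormedSpace ℝ Y]
    [NormedAddCommGroup Y₁] [NormedSpace ℝ Y₁]
    [NormedAddCommGroup Y₂] [NormedSpace ℝ Y₂]
    (hN : IsAbsoluteNorm N)
    (i₁ : Y₁ →L[ℝ] Y) (i₂ : Y₂ →L[ℝ] Y) (p₁ : Y →L[ℝ] Y₁) (p₂ : Y →L[ℝ] Y₂)
    (hnorm : ∀ y : Y, ‖y‖ = N ‖p₁ y‖ ‖p₂ y‖)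
    (hp₁i₁ : ∀ w, p₁ (i₁ w) = w) (hp₂i₁ : ∀ w, p₂ (i₁ w) = 0)
    (hp₁i₂ : ∀ z, p₁ (i₂ z) = 0) (hp₂i₂ : ∀ z, p₂ (i₂ z) = z)
    (hdec : ∀ y : Y, y = i₁ (p₁ y) + i₂ (p₂ y))
    (h : ∀ T : X →L[ℝ] Y, IsCompactOperator (⇑T) → ∀ ε : ℝ, 0 < ε →
      ∃ S : X →L[ℝ] Y, IsCompactOperator (⇑S) ∧ S ∈ NA X Y ∧ ‖S - T‖ < ε)
    (T : X →L[ℝ] Y₁) (hT : IsCompactOperator (⇑T)) (ε : ℝ) (hε : 0 < ε)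
    (hTe : ε ≤ ‖T‖) :
    ∃ S : X →L[ℝ] Y₁, IsCompactOperator (⇑S) ∧ S ∈ NA X Y₁ ∧ ‖S - T‖ < ε := by
  have hi₁norm : ∀ w : Y₁, ‖i₁ w‖ = ‖w‖ := by
    intro w
    rw [hnorm (i₁ w), hp₁i₁, hp₂i₁, norm_zero]
    exact N_s_zero hN (norm_nonneg w)
  have hi₂norm : ∀ z : Y₂, ‖i₂ z‖ = ‖z‖ := by
    intro z
    rw [hnorm (i₂ z), hp₁i₂, hp₂i₂, norm_zero]
    exact N_zero_t hN (norm_nonneg z)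
  have hp₁le : ∀ y : Y, ‖p₁ y‖ ≤ ‖y‖ := by
    intro y
    rw [hnorm y]
    exact le_N_left hN (norm_nonneg _)
  have hp₂le : ∀ y : Y, ‖p₂ y‖ ≤ ‖y‖ := by
    intro y
    rw [hnorm y]
    exact le_N_right hN (norm_nonneg _)
  have hTpos : 0 < ‖T‖ := lt_of_lt_of_le hε hTe
  set δ : ℝ := min (ε / 8) (‖T‖ / 4) with hδdef
  have hδpos : 0 < δ := lt_min (by linarith) (by linarith)
  have hδε : δ ≤ ε / 8 := min_le_left _ _
  have hδT : δ ≤ ‖T‖ / 4 := min_le_right _ _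
  clear_value δ
  have hT'c : IsCompactOperator (⇑(i₁.comp T)) :=
    hT.continuous_comp i₁.continuous
  obtain ⟨S, hSc, ⟨x₀, hx₀n, hx₀⟩, hST⟩ := h (i₁.comp T) hT'c δ hδpos
  have hST' : ‖S - i₁.comp T‖ ≤ δ := le_of_lt hST
  -- the components of S
  have hSnorm : ∀ x : X, ‖S x‖ = N ‖p₁ (S x)‖ ‖p₂ (S x)‖ := fun x => hnorm (S x)
  have hS₂small : ∀ x : X, ‖p₂ (S x)‖ ≤ δ * ‖x‖ := by
    intro x
    have h1 : p₂ (S x) = p₂ ((S - i₁.comp T) x) := by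
      rw [ContinuousLinearMap.sub_apply, map_sub, ContinuousLinearMap.comp_apply,
        hp₂i₁, sub_zero]
    calc ‖p₂ (S x)‖ = ‖p₂ ((S - i₁.comp T) x)‖ := by rw [h1]
      _ ≤ ‖(S - i₁.comp T) x‖ := hp₂le _
      _ ≤ ‖S - i₁.comp T‖ * ‖x‖ := (S - i₁.comp T).le_opNorm x
      _ ≤ δ * ‖x‖ := mul_le_mul_of_nonneg_right hST' (norm_nonneg x)
  have hS₁close : ∀ x : X, ‖p₁ (S x) - T x‖ ≤ δ * ‖x‖ := by
    intro x
    have h1 : p₁ (S x) - T x = p₁ ((S - i₁.comp T) x) := by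
      rw [ContinuousLinearMap.sub_apply, map_sub, ContinuousLinearMap.comp_apply,
        hp₁i₁]
    calc ‖p₁ (S x) - T x‖ = ‖p₁ ((S - i₁.comp T) x)‖ := by rw [h1]
      _ ≤ ‖(S - i₁.comp T) x‖ := hp₁le _
      _ ≤ ‖S - i₁.comp T‖ * ‖x‖ := (S - i₁.comp T).le_opNorm x
      _ ≤ δ * ‖x‖ := mul_le_mul_of_nonneg_right hST' (norm_nonneg x)
  have hT'norm : ‖i₁.comp T‖ = ‖T‖ := by
    apply le_antisymm
    · apply ContinuousLinearMap.opNorm_le_bound _ (norm_nonneg T)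
      intro x
      rw [ContinuousLinearMap.comp_apply, hi₁norm]
      exact T.le_opNorm x
    · apply ContinuousLinearMap.opNorm_le_bound _ (norm_nonneg _)
      intro x
      have h2 : ‖T x‖ = ‖(i₁.comp T) x‖ := by
        rw [ContinuousLinearMap.comp_apply, hi₁norm]
      rw [h2]
      exact (i₁.comp T).le_opNorm x
  set M : ℝ := ‖S‖ with hMdef
  have hMge : ‖T‖ - δ ≤ M := by
    have h1 : ‖i₁.comp T‖ - ‖S‖ ≤ ‖i₁.comp T - S‖ := norm_sub_norm_le _ _
    rw [norm_sub_rev] at h1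
    rw [← hT'norm]
    linarith [hST]
  have hMpos : 0 < M := by linarith
  clear_value M
  set a : ℝ := ‖p₁ (S x₀)‖ with hadef
  set b : ℝ := ‖p₂ (S x₀)‖ with hbdef
  have hb : b ≤ δ := by
    have h1 := hS₂small x₀
    rwa [hx₀n, mul_one] at h1
  have hMab : M ≤ a + b := by
    rw [← hx₀, hSnorm x₀, hadef, hbdef]
    exact N_le_add hN (norm_nonneg _) (norm_nonneg _)
  have ha_lb : ‖T‖ / 2 ≤ a := by linarith
  have hapos : 0 < a := by linarith
  have ha_ub : a ≤ ‖T‖ + δ := by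
    have h1 : ‖p₁ (S x₀) - T x₀‖ ≤ δ := by
      have h2 := hS₁close x₀
      rwa [hx₀n, mul_one] at h2
    have h2 : ‖p₁ (S x₀)‖ - ‖T x₀‖ ≤ ‖p₁ (S x₀) - T x₀‖ := norm_sub_norm_le _ _
    have h3 : ‖T x₀‖ ≤ ‖T‖ := by
      have h4 := T.le_opNorm x₀
      rwa [hx₀n, mul_one] at h4
    rw [hadef]
    linarith
  clear_value a b
  -- the norming functional
  have hSx₀ne : S x₀ ≠ 0 := by
    rw [← norm_pos_iff, hx₀]
    exact hMpos
  obtain ⟨g, hg1, hgx⟩ := exists_dual_vector ℝ (S x₀) (norm_ne_zero_iff.mpr hSx₀ne)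
  have hgle : ∀ y : Y, g y ≤ ‖y‖ := by
    intro y
    calc g y ≤ |g y| := le_abs_self _
      _ = ‖g y‖ := (Real.norm_eq_abs _).symm
      _ ≤ ‖g‖ * ‖y‖ := g.le_opNorm y
      _ = ‖y‖ := by rw [hg1, one_mul]
  have hgabs : ∀ y : Y, |g y| ≤ ‖y‖ := by
    intro y
    calc |g y| = ‖g y‖ := (Real.norm_eq_abs _).symm
      _ ≤ ‖g‖ * ‖y‖ := g.le_opNorm y
      _ = ‖y‖ := by rw [hg1, one_mul]
  set u : Y₁ := a⁻¹ • p₁ (S x₀) with hudef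
  have hu : ‖u‖ = 1 := by
    rw [hudef, norm_smul, Real.norm_eq_abs, abs_of_pos (inv_pos.mpr hapos), ← hadef]
    field_simp
  have hS₁x₀u : p₁ (S x₀) = a • u := by
    rw [hudef, smul_smul, mul_inv_cancel₀ (ne_of_gt hapos), one_smul]
  clear_value u
  set α : ℝ := g (i₁ u) with hαdef
  set γ : ℝ := g (i₂ (p₂ (S x₀))) with hγdef
  have hαγ : α * a + γ = M := by
    have h1 : S x₀ = i₁ (p₁ (S x₀)) + i₂ (p₂ (S x₀)) := hdec (S x₀)
    have h2 : g (S x₀) = M := by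
      rw [hgx, hx₀]
      simp [RCLike.ofReal_real_eq_id]
    rw [h1, map_add, hS₁x₀u, map_smul] at h2
    rw [hαdef, hγdef]
    simpa [smul_eq_mul, mul_comm] using h2
  have hγabs : |γ| ≤ δ := by
    calc |γ| ≤ ‖i₂ (p₂ (S x₀))‖ := hgabs _
      _ = b := (hi₂norm _).trans hbdef.symm
      _ ≤ δ := hb
  have hαa_lb : ‖T‖ / 2 ≤ α * a := by
    have h1 := abs_le.mp hγabs
    linarith
  have hαpos : 0 < α := by
    by_contra hc
    push_neg at hc
    have h1 : α * a ≤ 0 := mul_nonpos_of_nonpos_of_nonneg hc (le_of_lt hapos)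
    linarith
  clear_value α γ
  -- the key inequality
  have key : ∀ x : X, α * ‖p₁ (S x)‖ + |g (i₂ (p₂ (S x)))| ≤ M * ‖x‖ := by
    intro x
    set σ : ℝ := if 0 ≤ g (i₂ (p₂ (S x))) then 1 else -1 with hσdef
    have hσabs : |σ| = 1 := by
      rw [hσdef]; split_ifs <;> simp
    have hσg : σ * g (i₂ (p₂ (S x))) = |g (i₂ (p₂ (S x)))| := by
      rw [hσdef]
      split_ifs with hc
      · rw [one_mul, abs_of_nonneg hc]
      · push_neg at hc
        rw [abs_of_neg hc]; ring
    clear_value σ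
    have h1 : g (i₁ (‖p₁ (S x)‖ • u) + i₂ (σ • p₂ (S x)))
        = α * ‖p₁ (S x)‖ + |g (i₂ (p₂ (S x)))| := by
      simp only [map_add, map_smul, smul_eq_mul]
      rw [hσg, hαdef]
      ring
    have h2 : ‖i₁ (‖p₁ (S x)‖ • u) + i₂ (σ • p₂ (S x))‖ = N ‖p₁ (S x)‖ ‖p₂ (S x)‖ := by
      rw [hnorm]
      have hq1 : p₁ (i₁ (‖p₁ (S x)‖ • u) + i₂ (σ • p₂ (S x))) = ‖p₁ (S x)‖ • u := by
        rw [map_add, hp₁i₁, hp₁i₂, add_zero]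
      have hq2 : p₂ (i₁ (‖p₁ (S x)‖ • u) + i₂ (σ • p₂ (S x))) = σ • p₂ (S x) := by
        rw [map_add, hp₂i₁, hp₂i₂, zero_add]
      rw [hq1, hq2]
      have hn1 : ‖(‖p₁ (S x)‖ • u)‖ = ‖p₁ (S x)‖ := by
        rw [norm_smul, Real.norm_eq_abs, abs_of_nonneg (norm_nonneg _), hu, mul_one]
      have hn2 : ‖σ • p₂ (S x)‖ = ‖p₂ (S x)‖ := by
        rw [norm_smul, Real.norm_eq_abs, hσabs, one_mul]
      rw [hn1, hn2]
    have h3 := hgle (i₁ (‖p₁ (S x)‖ • u) + i₂ (σ • p₂ (S x)))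
    rw [h1, h2] at h3
    have h4 : ‖S x‖ ≤ M * ‖x‖ := by rw [hMdef]; exact S.le_opNorm x
    rw [hSnorm x] at h4
    linarith
  -- the corrected operator
  set f : X →L[ℝ] ℝ := g.comp (i₂.comp (p₂.comp S)) with hfdef
  have hfapp : ∀ x : X, f x = g (i₂ (p₂ (S x))) := by
    intro x
    rw [hfdef]
    rfl
  clear_value f
  set G : X →L[ℝ] Y₁ := p₁.comp S + α⁻¹ • f.smulRight u with hGdef
  have hGapp : ∀ x : X, G x = p₁ (S x) + (α⁻¹ * f x) • u := by
    intro x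
    rw [hGdef]
    simp [ContinuousLinearMap.smulRight_apply, smul_smul]
  clear_value G
  have hGle : ∀ x : X, ‖G x‖ ≤ (M / α) * ‖x‖ := by
    intro x
    have h1 : ‖G x‖ ≤ ‖p₁ (S x)‖ + α⁻¹ * |f x| := by
      rw [hGapp x]
      calc ‖p₁ (S x) + (α⁻¹ * f x) • u‖
          ≤ ‖p₁ (S x)‖ + ‖(α⁻¹ * f x) • u‖ := norm_add_le _ _
        _ = ‖p₁ (S x)‖ + |α⁻¹ * f x| := by
            rw [norm_smul, Real.norm_eq_abs, hu, mul_one]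
        _ ≤ ‖p₁ (S x)‖ + α⁻¹ * |f x| := by
            rw [abs_mul, abs_of_pos (inv_pos.mpr hαpos)]
    have h2 : α * ‖p₁ (S x)‖ + |f x| ≤ M * ‖x‖ := by
      rw [hfapp]; exact key x
    have hinv : (0:ℝ) < α⁻¹ := inv_pos.mpr hαpos
    have h3 : ‖p₁ (S x)‖ + α⁻¹ * |f x| ≤ (M / α) * ‖x‖ := by
      have h5 : ‖p₁ (S x)‖ + α⁻¹ * |f x| = α⁻¹ * (α * ‖p₁ (S x)‖ + |f x|) := by
        field_simp
      rw [h5, div_eq_mul_inv]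
      calc α⁻¹ * (α * ‖p₁ (S x)‖ + |f x|) ≤ α⁻¹ * (M * ‖x‖) :=
            mul_le_mul_of_nonneg_left h2 (le_of_lt hinv)
        _ = M * α⁻¹ * ‖x‖ := by ring
    linarith
  have hGnorm_le : ‖G‖ ≤ M / α :=
    ContinuousLinearMap.opNorm_le_bound _
      (le_of_lt (div_pos hMpos hαpos)) hGle
  have hGx₀ : ‖G x₀‖ = M / α := by
    have h1 : G x₀ = (a + α⁻¹ * γ) • u := by
      rw [hGapp x₀, hfapp, ← hγdef, hS₁x₀u, ← add_smul]
    have h2 : a + α⁻¹ * γ = M / α := by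
      rw [eq_div_iff (ne_of_gt hαpos)]
      have h5 : α⁻¹ * α = 1 := inv_mul_cancel₀ (ne_of_gt hαpos)
      linear_combination hαγ + γ * h5
    rw [h1, h2, norm_smul, Real.norm_eq_abs, hu, mul_one,
      abs_of_pos (div_pos hMpos hαpos)]
  have hGnorm : ‖G‖ = M / α := by
    apply le_antisymm hGnorm_le
    rw [← hGx₀]
    calc ‖G x₀‖ ≤ ‖G‖ * ‖x₀‖ := G.le_opNorm x₀
      _ = ‖G‖ := by rw [hx₀n, mul_one]
  -- compactness of G
  have hS₁c : IsCompactOperator (⇑(p₁.comp S)) := hSc.continuous_comp p₁.continuous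
  have hfc : IsCompactOperator (⇑f) := by
    refine ⟨Set.Icc (-1 : ℝ) 1, isCompact_Icc, ?_⟩
    apply f.continuous.continuousAt.preimage_mem_nhds
    rw [map_zero]
    exact Icc_mem_nhds (by norm_num) (by norm_num)
  have hGc : IsCompactOperator (⇑G) := by
    have h1 : IsCompactOperator ⇑(f.smulRight u) := by
      have h2 : ⇑(f.smulRight u) = (fun t : ℝ => t • u) ∘ ⇑f := by
        ext x; simp
      rw [h2]
      exact hfc.continuous_comp (continuous_id.smul continuous_const)
    have h2 : IsCompactOperator ⇑(α⁻¹ • f.smulRight u) := by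
      have h3 : ⇑(α⁻¹ • f.smulRight u) = α⁻¹ • ⇑(f.smulRight u) := by
        ext x; simp
      rw [h3]
      exact h1.smul α⁻¹
    have h3 : ⇑G = ⇑(p₁.comp S) + ⇑(α⁻¹ • f.smulRight u) := by
      rw [hGdef]; ext x; simp
    rw [h3]
    exact hS₁c.add h2
  -- the distance estimate
  have hα25 : 2 / 5 ≤ α := by
    nlinarith [hαa_lb, ha_ub, hδT, hαpos, hTpos]
  have hGT : ∀ x : X, ‖(G - T) x‖ ≤ (δ + δ / α) * ‖x‖ := by
    intro x
    have h1 : (G - T) x = (p₁ (S x) - T x) + (α⁻¹ * f x) • u := by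
      rw [ContinuousLinearMap.sub_apply, hGapp x]
      abel
    have h2 : ‖(α⁻¹ * f x) • u‖ ≤ (δ / α) * ‖x‖ := by
      rw [norm_smul, Real.norm_eq_abs, hu, mul_one, abs_mul,
        abs_of_pos (inv_pos.mpr hαpos)]
      have h3 : |f x| ≤ δ * ‖x‖ := by
        rw [hfapp]
        calc |g (i₂ (p₂ (S x)))| ≤ ‖i₂ (p₂ (S x))‖ := hgabs _
          _ = ‖p₂ (S x)‖ := hi₂norm _
          _ ≤ δ * ‖x‖ := hS₂small x
      calc α⁻¹ * |f x| ≤ α⁻¹ * (δ * ‖x‖) :=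
            mul_le_mul_of_nonneg_left h3 (le_of_lt (inv_pos.mpr hαpos))
        _ = (δ / α) * ‖x‖ := by rw [div_eq_mul_inv]; ring
    calc ‖(G - T) x‖ = ‖(p₁ (S x) - T x) + (α⁻¹ * f x) • u‖ := by rw [h1]
      _ ≤ ‖p₁ (S x) - T x‖ + ‖(α⁻¹ * f x) • u‖ := norm_add_le _ _
      _ ≤ δ * ‖x‖ + (δ / α) * ‖x‖ := add_le_add (hS₁close x) h2
      _ = (δ + δ / α) * ‖x‖ := by ring
  have hGTnorm : ‖G - T‖ ≤ δ + δ / α := by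
    apply ContinuousLinearMap.opNorm_le_bound _ _ hGT
    have : 0 < δ / α := div_pos hδpos hαpos
    linarith
  have hfinal : δ + δ / α < ε := by
    have h1 : δ / α ≤ (5 / 2) * δ := by
      rw [div_le_iff₀ hαpos]
      nlinarith [hα25, hδpos]
    linarith
  exact ⟨G, hGc, ⟨x₀, hx₀n, hGx₀.trans hGnorm.symm⟩,
    lt_of_le_of_lt hGTnorm hfinal⟩

end IsAbsoluteNormAux

open IsAbsoluteNormAux in
theorem na_compact_dense_absolute_summand_range (X Y Y₁ Y₂ : Type*)
    [NormedAddCommGroup X] [NormedSpace ℝ X] [CompleteSpace X]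
    [NormedAddCommGroup Y] [NormedSpace ℝ Y] [CompleteSpace Y]
    [NormedAddCommGroup Y₁] [NormedSpace ℝ Y₁] [CompleteSpace Y₁]
    [NormedAddCommGroup Y₂] [NormedSpace ℝ Y₂] [CompleteSpace Y₂]
    (N : ℝ → ℝ → ℝ) (hN : IsAbsoluteNorm N)
    (e : Y ≃L[ℝ] Y₁ × Y₂) (he : ∀ y : Y, ‖y‖ = N ‖(e y).1‖ ‖(e y).2‖)
    (h : ∀ T : X →L[ℝ] Y, IsCompactOperator (⇑T) → ∀ ε : ℝ, 0 < ε →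
      ∃ S : X →L[ℝ] Y, IsCompactOperator (⇑S) ∧ S ∈ NA X Y ∧ ‖S - T‖ < ε) :
    ∀ T : X →L[ℝ] Y₁, IsCompactOperator (⇑T) → ∀ ε : ℝ, 0 < ε →
      ∃ S : X →L[ℝ] Y₁, IsCompactOperator (⇑S) ∧ S ∈ NA X Y₁ ∧ ‖S - T‖ < ε := by
  intro T hT ε hε
  rcases lt_or_ge ‖T‖ ε with hTe | hTe
  · -- trivial case: T is small, use the zero operator
    obtain ⟨S', hS'c, ⟨x₀, hx₀, -⟩, -⟩ := h 0 isCompactOperator_zero 1 one_pos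
    exact ⟨0, isCompactOperator_zero, ⟨x₀, hx₀, by simp⟩, by simpa using hTe⟩
  · -- main case
    refine main_step hN
      ((e.symm : Y₁ × Y₂ →L[ℝ] Y).comp (ContinuousLinearMap.inl ℝ Y₁ Y₂))
      ((e.symm : Y₁ × Y₂ →L[ℝ] Y).comp (ContinuousLinearMap.inr ℝ Y₁ Y₂))
      ((ContinuousLinearMap.fst ℝ Y₁ Y₂).comp (e : Y →L[ℝ] Y₁ × Y₂))
      ((ContinuousLinearMap.snd ℝ Y₁ Y₂).comp (e : Y →L[ℝ] Y₁ × Y₂))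
      (fun y => by simpa using he y)
      (fun w => by simp) (fun w => by simp) (fun z => by simp) (fun z => by simp)
      (fun y => ?_) h T hT ε hε hTe
    simp only [ContinuousLinearMap.comp_apply, ContinuousLinearMap.inl_apply,
      ContinuousLinearMap.inr_apply, ContinuousLinearMap.coe_fst',
      ContinuousLinearMap.coe_snd', ContinuousLinearEquiv.coe_coe]
    have h1 : ((e y).1, (0 : Y₂)) + ((0 : Y₁), (e y).2) = e y := by
      simp [Prod.ext_iff]
    rw [← map_add, h1, e.symm_apply_apply]
end

section
/- Let W and Z be real Banach spaces, let N be an absolute norm, and let W ⊕_a Z be the corresponding absolute sum. For T a bounded linear operator on W, define the bounded linear operator T̃ on W ⊕_a Z by T̃(w,z) = (Tw, 0). Then v(T̃) = v(T) and ‖T̃‖ = ‖T‖, where v denotes the numerical radius. -/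
open Filter Topology

/-- The numerical radius of a bounded linear operator on `X`:
`v(T) = sup {|x*(T x)| : ‖x‖ = ‖x*‖ = 1, x*(x) = 1}`. -/
noncomputable def NumRadius {X : Type*} [NormedAddCommGroup X] [NormedSpace ℝ X]
    (T : X →L[ℝ] X) : ℝ :=
  sSup {r : ℝ | ∃ (x : X) (f : X →L[ℝ] ℝ),
    ‖x‖ = 1 ∧ ‖f‖ = 1 ∧ f x = 1 ∧ r = |f (T x)|}

section Aux

variable {N : ℝ → ℝ → ℝ}

theorem IsAbsoluteNorm.neg_left (hN : IsAbsoluteNorm N) (s t : ℝ) : N (-s) t = N s t := by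
  rw [hN.abs_eq, abs_neg, ← hN.abs_eq]

theorem IsAbsoluteNorm.neg_right (hN : IsAbsoluteNorm N) (s t : ℝ) : N s (-t) = N s t := by
  rw [hN.abs_eq, abs_neg, ← hN.abs_eq]

theorem IsAbsoluteNorm.left_zero (hN : IsAbsoluteNorm N) {s : ℝ} (hs : 0 ≤ s) : N s 0 = s := by
  have h := hN.smul s 1 0
  simpa [hN.one_zero, abs_of_nonneg hs] using h

theorem IsAbsoluteNorm.zero_right (hN : IsAbsoluteNorm N) {t : ℝ} (ht : 0 ≤ t) : N 0 t = t := by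
  have h := hN.smul t 0 1
  simpa [hN.zero_one, abs_of_nonneg ht] using h

theorem IsAbsoluteNorm.mono_left_s10 (hN : IsAbsoluteNorm N) {s s' : ℝ} (t : ℝ)
    (h0 : 0 ≤ s') (h : s' ≤ s) : N s' t ≤ N s t := by
  rcases eq_or_lt_of_le (h0.trans h) with hs | hs
  · have : s' = 0 := le_antisymm (h.trans hs.symm.le) h0
    rw [this, ← hs]
  · set a : ℝ := (s + s') / (2 * s) with ha
    set b : ℝ := (s - s') / (2 * s) with hb
    have hane : (0:ℝ) < 2 * s := by linarith
    have ha0 : 0 ≤ a := by positivity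
    have hb0 : 0 ≤ b := by
      apply div_nonneg (by linarith) hane.le
    have hab : a + b = 1 := by
      rw [ha, hb, ← add_div, show s + s' + (s - s') = 2 * s by ring]
      exact div_self hane.ne'
    have h1 : a * s + b * (-s) = s' := by
      rw [ha, hb, div_mul_eq_mul_div, div_mul_eq_mul_div, ← add_div,
        show (s + s') * s + (s - s') * (-s) = s' * (2 * s) by ring]
      exact mul_div_cancel_right₀ s' hane.ne'
    have h2 : a * t + b * t = t := by
      rw [← add_mul, hab, one_mul]
    calc N s' t = N (a * s + b * (-s)) (a * t + b * t) := by rw [h1, h2]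
      _ ≤ N (a * s) (a * t) + N (b * (-s)) (b * t) := hN.triangle _ _ _ _
      _ = a * N s t + b * N s t := by
          rw [hN.smul, hN.smul, hN.neg_left, abs_of_nonneg ha0, abs_of_nonneg hb0]
      _ = N s t := by rw [← add_mul, hab, one_mul]

theorem IsAbsoluteNorm.mono_right_s10 (hN : IsAbsoluteNorm N) (s : ℝ) {t t' : ℝ}
    (h0 : 0 ≤ t') (h : t' ≤ t) : N s t' ≤ N s t := by
  rcases eq_or_lt_of_le (h0.trans h) with ht | ht
  · have : t' = 0 := le_antisymm (h.trans ht.symm.le) h0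
    rw [this, ← ht]
  · set a : ℝ := (t + t') / (2 * t) with ha
    set b : ℝ := (t - t') / (2 * t) with hb
    have hane : (0:ℝ) < 2 * t := by linarith
    have ha0 : 0 ≤ a := by positivity
    have hb0 : 0 ≤ b := by
      apply div_nonneg (by linarith) hane.le
    have hab : a + b = 1 := by
      rw [ha, hb, ← add_div, show t + t' + (t - t') = 2 * t by ring]
      exact div_self hane.ne'
    have h1 : a * t + b * (-t) = t' := by
      rw [ha, hb, div_mul_eq_mul_div, div_mul_eq_mul_div, ← add_div,
        show (t + t') * t + (t - t') * (-t) = t' * (2 * t) by ring]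
      exact mul_div_cancel_right₀ t' hane.ne'
    have h2 : a * s + b * s = s := by
      rw [← add_mul, hab, one_mul]
    calc N s t' = N (a * s + b * s) (a * t + b * (-t)) := by rw [h1, h2]
      _ ≤ N (a * s) (a * t) + N (b * s) (b * (-t)) := hN.triangle _ _ _ _
      _ = a * N s t + b * N s t := by
          rw [hN.smul, hN.smul, hN.neg_right, abs_of_nonneg ha0, abs_of_nonneg hb0]
      _ = N s t := by rw [← add_mul, hab, one_mul]

theorem IsAbsoluteNorm.mono (hN : IsAbsoluteNorm N) {s s' t t' : ℝ}
    (hs0 : 0 ≤ s') (hs : s' ≤ s) (ht0 : 0 ≤ t') (ht : t' ≤ t) : N s' t' ≤ N s t :=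
  (hN.mono_right_s10 s' ht0 ht).trans (hN.mono_left_s10 t hs0 hs)

/-- Approximate attainment of the operator norm of a real functional. -/
theorem exists_approx_functional {W : Type*} [NormedAddCommGroup W] [NormedSpace ℝ W]
    (g : W →L[ℝ] ℝ) (w : W) {ε : ℝ} (hε : 0 < ε) :
    ∃ w' : W, ‖w'‖ ≤ ‖w‖ ∧ ‖g‖ * ‖w‖ - ε ≤ g w' := by
  rcases eq_or_ne w 0 with rfl | hw
  · exact ⟨0, by simp, by simpa using hε.le⟩
  · have hw0 : 0 < ‖w‖ := norm_pos_iff.2 hw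
    have hr : ‖g‖ - ε / ‖w‖ < ‖g‖ := by
      have : 0 < ε / ‖w‖ := div_pos hε hw0
      linarith
    obtain ⟨u, hu1, hu2⟩ := g.exists_lt_apply_of_lt_opNorm hr
    rcases le_or_gt 0 (g u) with hgu | hgu
    · refine ⟨‖w‖ • u, ?_, ?_⟩
      · rw [norm_smul, Real.norm_eq_abs, abs_of_nonneg hw0.le]
        nlinarith
      · rw [map_smul]
        have : ‖g u‖ = g u := by rw [Real.norm_eq_abs, abs_of_nonneg hgu]
        rw [this] at hu2
        have := mul_le_mul_of_nonneg_left hu2.le hw0.le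
        rw [mul_sub] at this
        rw [smul_eq_mul]
        have hd : ‖w‖ * (ε / ‖w‖) = ε := by field_simp
        nlinarith [mul_le_mul_of_nonneg_left hu2.le hw0.le]
    · refine ⟨(-‖w‖) • u, ?_, ?_⟩
      · rw [norm_smul, Real.norm_eq_abs, abs_neg, abs_of_nonneg hw0.le]
        nlinarith
      · rw [map_smul, smul_eq_mul]
        have : ‖g u‖ = -(g u) := by rw [Real.norm_eq_abs, abs_of_neg hgu]
        rw [this] at hu2
        have hd : ‖w‖ * (ε / ‖w‖) = ε := by field_simp
        nlinarith [mul_le_mul_of_nonneg_left hu2.le hw0.le]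

theorem numRadius_nonneg {X : Type*} [NormedAddCommGroup X] [NormedSpace ℝ X]
    (T : X →L[ℝ] X) : 0 ≤ NumRadius T := by
  rw [NumRadius]
  exact Real.sSup_nonneg (by rintro r ⟨x, f, _, _, _, rfl⟩; positivity)

theorem numRadius_bddAbove {X : Type*} [NormedAddCommGroup X] [NormedSpace ℝ X]
    (T : X →L[ℝ] X) : BddAbove {r : ℝ | ∃ (x : X) (f : X →L[ℝ] ℝ),
      ‖x‖ = 1 ∧ ‖f‖ = 1 ∧ f x = 1 ∧ r = |f (T x)|} := by
  refine ⟨‖T‖, ?_⟩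
  rintro r ⟨x, f, hx, hf, hfx, rfl⟩
  calc |f (T x)| = ‖f (T x)‖ := (Real.norm_eq_abs _).symm
    _ ≤ ‖f‖ * ‖T x‖ := f.le_opNorm _
    _ = ‖T x‖ := by rw [hf, one_mul]
    _ ≤ ‖T‖ * ‖x‖ := T.le_opNorm _
    _ = ‖T‖ := by rw [hx, mul_one]

end Aux

theorem numRadius_and_norm_of_extension (W Z X : Type*)
    [NormedAddCommGroup W] [NormedSpace ℝ W] [CompleteSpace W]
    [NormedAddCommGroup Z] [NormedSpace ℝ Z] [CompleteSpace Z]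
    [NormedAddCommGroup X] [NormedSpace ℝ X] [CompleteSpace X]
    (N : ℝ → ℝ → ℝ) (hN : IsAbsoluteNorm N)
    (e : X ≃L[ℝ] W × Z) (he : ∀ x : X, ‖x‖ = N ‖(e x).1‖ ‖(e x).2‖)
    (T : W →L[ℝ] W) :
    NumRadius ((e.symm : W × Z →L[ℝ] X).comp
        ((((T.comp (ContinuousLinearMap.fst ℝ W Z)).prod (0 : W × Z →L[ℝ] Z))).comp
          (e : X →L[ℝ] W × Z))) = NumRadius T ∧
    ‖(e.symm : W × Z →L[ℝ] X).comp
        ((((T.comp (ContinuousLinearMap.fst ℝ W Z)).prod (0 : W × Z →L[ℝ] Z))).comp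
          (e : X →L[ℝ] W × Z))‖ = ‖T‖ := by
  set A : X →L[ℝ] X := (e.symm : W × Z →L[ℝ] X).comp
      ((((T.comp (ContinuousLinearMap.fst ℝ W Z)).prod (0 : W × Z →L[ℝ] Z))).comp
        (e : X →L[ℝ] W × Z)) with hA
  have hAx : ∀ x : X, A x = e.symm (T (e x).1, (0:Z)) := fun x => rfl
  have hnorm : ∀ p : W × Z, ‖(e.symm p : X)‖ = N ‖p.1‖ ‖p.2‖ := by
    intro p
    rw [he (e.symm p), e.apply_symm_apply]
  -- norm of elements of W embedded in X
  have hinl : ∀ w : W, ‖(e.symm (w, (0:Z)) : X)‖ = ‖w‖ := by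
    intro w
    rw [hnorm]
    simpa using hN.left_zero (norm_nonneg w)
  -- the norm statement
  have hnormA : ‖A‖ = ‖T‖ := by
    apply le_antisymm
    · apply A.opNorm_le_bound (norm_nonneg T)
      intro x
      have h1 : ‖A x‖ = ‖T (e x).1‖ := by rw [hAx, hinl]
      rw [h1, he x]
      calc ‖T (e x).1‖ ≤ ‖T‖ * ‖(e x).1‖ := T.le_opNorm _
        _ = ‖T‖ * N ‖(e x).1‖ 0 := by rw [hN.left_zero (norm_nonneg _)]
        _ ≤ ‖T‖ * N ‖(e x).1‖ ‖(e x).2‖ := by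
            exact mul_le_mul_of_nonneg_left
              (hN.mono_right_s10 _ le_rfl (norm_nonneg _)) (norm_nonneg T)
    · apply T.opNorm_le_bound (norm_nonneg A)
      intro w
      have h1 : A (e.symm (w, (0:Z))) = e.symm (T w, (0:Z)) := by
        rw [hAx, e.apply_symm_apply]
      calc ‖T w‖ = ‖A (e.symm (w, (0:Z)))‖ := by rw [h1, hinl]
        _ ≤ ‖A‖ * ‖(e.symm (w, (0:Z)) : X)‖ := A.le_opNorm _
        _ = ‖A‖ * ‖w‖ := by rw [hinl]
  refine ⟨le_antisymm ?_ ?_, hnormA⟩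
  · -- v(A) ≤ v(T)
    apply Real.sSup_le _ (numRadius_nonneg T)
    rintro r ⟨x, f, hx, hf, hfx, rfl⟩
    set w : W := (e x).1 with hw
    set z : Z := (e x).2 with hz
    set g : W →L[ℝ] ℝ :=
      f.comp ((e.symm : W × Z →L[ℝ] X).comp (ContinuousLinearMap.inl ℝ W Z)) with hg
    set k : Z →L[ℝ] ℝ :=
      f.comp ((e.symm : W × Z →L[ℝ] X).comp (ContinuousLinearMap.inr ℝ W Z)) with hk
    have hgapp : ∀ w' : W, g w' = f (e.symm (w', (0:Z))) := fun _ => rfl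
    have hkapp : ∀ z' : Z, k z' = f (e.symm ((0:W), z')) := fun _ => rfl
    have hsplit : ∀ (w' : W) (z' : Z), g w' + k z' = f (e.symm (w', z')) := by
      intro w' z'
      rw [hgapp, hkapp, ← map_add, ← map_add]
      congr 1
      simp
    have hsum : g w + k z = 1 := by
      rw [hsplit]
      have : ((w, z) : W × Z) = e x := by simp [hw, hz]
      rw [this, e.symm_apply_apply, hfx]
    have hNwz : N ‖w‖ ‖z‖ = 1 := by rw [← he x, hx]
    -- ‖g‖ ‖w‖ + ‖k‖ ‖z‖ ≤ 1
    have hgle : ‖g‖ * ‖w‖ + ‖k‖ * ‖z‖ ≤ 1 := by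
      refine le_of_forall_pos_le_add fun ε hε => ?_
      obtain ⟨w', hw1, hw2⟩ := exists_approx_functional g w (half_pos hε)
      obtain ⟨z', hz1, hz2⟩ := exists_approx_functional k z (half_pos hε)
      have key : g w' + k z' ≤ 1 := by
        rw [hsplit]
        calc f (e.symm (w', z')) ≤ |f (e.symm (w', z'))| := le_abs_self _
          _ = ‖f (e.symm (w', z'))‖ := (Real.norm_eq_abs _).symm
          _ ≤ ‖f‖ * ‖(e.symm (w', z') : X)‖ := f.le_opNorm _
          _ = N ‖w'‖ ‖z'‖ := by rw [hf, one_mul, hnorm]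
          _ ≤ N ‖w‖ ‖z‖ := hN.mono (norm_nonneg _) hw1 (norm_nonneg _) hz1
          _ = 1 := hNwz
      linarith
    have hgwle : g w ≤ ‖g‖ * ‖w‖ := by
      calc g w ≤ |g w| := le_abs_self _
        _ = ‖g w‖ := (Real.norm_eq_abs _).symm
        _ ≤ ‖g‖ * ‖w‖ := g.le_opNorm _
    have hkzle : k z ≤ ‖k‖ * ‖z‖ := by
      calc k z ≤ |k z| := le_abs_self _
        _ = ‖k z‖ := (Real.norm_eq_abs _).symm
        _ ≤ ‖k‖ * ‖z‖ := k.le_opNorm _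
    have hgw : g w = ‖g‖ * ‖w‖ := by linarith
    have hfAx : f (A x) = g (T w) := by
      rw [hAx, hgapp]
    rw [hfAx]
    rcases eq_or_lt_of_le (mul_nonneg (norm_nonneg g) (norm_nonneg w)) with hc | hc
    · -- ‖g‖‖w‖ = 0 : the value is 0
      have : g (T w) = 0 := by
        rcases mul_eq_zero.1 hc.symm with h | h
        · have : g = 0 := by
            ext v
            have := g.le_opNorm v
            rw [h, zero_mul] at this
            have h2 : |g v| ≤ 0 := by rwa [← Real.norm_eq_abs]
            simp [abs_nonpos_iff.1 h2]
          simp [this]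
        · have : w = 0 := norm_eq_zero.1 h
          simp [this]
      rw [this]
      simpa using numRadius_nonneg T
    · -- ‖g‖‖w‖ > 0
      have hgpos : 0 < ‖g‖ := by
        rcases (norm_nonneg g).lt_or_eq with h | h
        · exact h
        · exfalso; rw [← h] at hc; simp at hc
      have hwpos : 0 < ‖w‖ := by
        rcases (norm_nonneg w).lt_or_eq with h | h
        · exact h
        · exfalso; rw [← h] at hc; simp at hc
      have hunorm : ‖(‖w‖⁻¹ • w : W)‖ = 1 := by
        rw [norm_smul, Real.norm_eq_abs, abs_inv, abs_norm, inv_mul_cancel₀ hwpos.ne']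
      have hg'norm : ‖(‖g‖⁻¹ • g : W →L[ℝ] ℝ)‖ = 1 := by
        rw [norm_smul (‖g‖⁻¹) g, Real.norm_eq_abs, abs_inv, abs_norm, inv_mul_cancel₀ hgpos.ne']
      have hg'u : (‖g‖⁻¹ • g : W →L[ℝ] ℝ) (‖w‖⁻¹ • w) = 1 := by
        simp only [ContinuousLinearMap.smul_apply, map_smul, smul_eq_mul]
        rw [hgw]
        field_simp
      have hval : (‖g‖⁻¹ • g : W →L[ℝ] ℝ) (T (‖w‖⁻¹ • w)) = (‖g‖ * ‖w‖)⁻¹ * g (T w) := by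
        simp only [ContinuousLinearMap.smul_apply, map_smul, smul_eq_mul, mul_inv]
        ring
      have hle : |(‖g‖⁻¹ • g : W →L[ℝ] ℝ) (T (‖w‖⁻¹ • w))| ≤ NumRadius T :=
        le_csSup (numRadius_bddAbove T) ⟨‖w‖⁻¹ • w, ‖g‖⁻¹ • g, hunorm, hg'norm, hg'u, rfl⟩
      refine le_trans ?_ hle
      rw [hval, abs_mul, abs_inv, abs_of_nonneg (mul_nonneg (norm_nonneg g) (norm_nonneg w))]
      have hc1 : ‖g‖ * ‖w‖ ≤ 1 := by
        linarith [mul_nonneg (norm_nonneg k) (norm_nonneg z)]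
      exact le_mul_of_one_le_left (abs_nonneg _) ((one_le_inv₀ hc).2 hc1)
  · -- v(T) ≤ v(A)
    apply Real.sSup_le _ (numRadius_nonneg A)
    rintro r ⟨w, g, hw, hg, hgw, rfl⟩
    set x : X := e.symm (w, (0:Z)) with hxdef
    set f : X →L[ℝ] ℝ :=
      g.comp ((ContinuousLinearMap.fst ℝ W Z).comp (e : X →L[ℝ] W × Z)) with hfdef
    have hfapp : ∀ y : X, f y = g (e y).1 := fun _ => rfl
    have hxn : ‖x‖ = 1 := by rw [hxdef, hinl, hw]
    have hfx : f x = 1 := by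
      rw [hfapp, hxdef, e.apply_symm_apply, hgw]
    have hfn : ‖f‖ = 1 := by
      apply le_antisymm
      · apply f.opNorm_le_bound zero_le_one
        intro y
        rw [one_mul, hfapp]
        calc ‖g (e y).1‖ ≤ ‖g‖ * ‖(e y).1‖ := g.le_opNorm _
          _ = ‖(e y).1‖ := by rw [hg, one_mul]
          _ = N ‖(e y).1‖ 0 := (hN.left_zero (norm_nonneg _)).symm
          _ ≤ N ‖(e y).1‖ ‖(e y).2‖ := hN.mono_right_s10 _ le_rfl (norm_nonneg _)
          _ = ‖y‖ := (he y).symm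
      · have := f.le_opNorm x
        rw [hxn, mul_one, hfx] at this
        simpa using this
    have hfAx : f (A x) = g (T w) := by
      rw [hAx, hfapp, e.apply_symm_apply, hxdef, e.apply_symm_apply]
    refine le_csSup (numRadius_bddAbove A) ⟨x, f, hxn, hfn, hfx, ?_⟩
    rw [hfAx]
end
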